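/- If n and m are k-element subsets of ℕ with d(n,m) ≥ 2 (where d is the segment-counting metric), then there exists a k-element subset l of ℕ, distinct from both n and m, such that d(n,l) = 1 and d(l,m) = d(n,m) - 1. Consequently d coincides with the shortest-path metric of the interlacing graph on [ℕ]^k. -/

import Mathlib

open Filter Finset

/-- The segment-counting distance: `d(n,m) = sup { | |n ∩ S| - |m ∩ S| | : S a segment of ℕ }`. -/
noncomputable def dseg (n m : Finset ℕ) : ℕ :=
  ⨆ a : ℕ, ⨆ b : ℕ,
    (((n ∩ Finset.Icc a b).card : ℤ) - ((m ∩ Finset.Icc a b).card : ℤ)).natAbs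

/-- The `i`-th element (in increasing order) of a `k`-element subset of `ℕ`. -/
def elt {k : ℕ} (n : Finset ℕ) (hn : n.card = k) (i : Fin k) : ℕ :=
  n.orderIsoOfFin hn i

/-- `n₁ ≤ m₁ ≤ n₂ ≤ m₂ ≤ … ≤ n_k ≤ m_k`, where elements are listed in increasing order. -/
def InterlacedLE {k : ℕ} (n m : Finset ℕ) (hn : n.card = k) (hm : m.card = k) : Prop :=
  (∀ i : Fin k, elt n hn i ≤ elt m hm i) ∧
  ∀ i j : Fin k, (i : ℕ) + 1 = (j : ℕ) → elt m hm i ≤ elt n hn j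

/-- The vertex set `[ℕ]^k`. -/
def Vk (k : ℕ) := {s : Finset ℕ // s.card = k}

/-- The interlacing graph on `[ℕ]^k`: distinct `n, m` are adjacent iff interlaced. -/
def interGraph (k : ℕ) : SimpleGraph (Vk k) where
  Adj x y := x ≠ y ∧ (InterlacedLE x.1 y.1 x.2 y.2 ∨ InterlacedLE y.1 x.1 y.2 x.2)
  symm := ⟨fun x y h => ⟨h.1.symm, h.2.symm⟩⟩
  loopless := ⟨fun x h => h.1 rfl⟩

/-! ### Auxiliary development -/

/-- counting function: number of elements of `n` below `x`. -/
def cnt (n : Finset ℕ) (x : ℕ) : ℕ := (n.filter (· < x)).card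

/-- `F(x) = |n ∩ [0,x)| - |m ∩ [0,x)|`. -/
def Fd (n m : Finset ℕ) (x : ℕ) : ℤ := (cnt n x : ℤ) - cnt m x

/-- The summand in the definition of `dseg`. -/
def tseg (n m : Finset ℕ) (a b : ℕ) : ℕ :=
  (((n ∩ Finset.Icc a b).card : ℤ) - ((m ∩ Finset.Icc a b).card : ℤ)).natAbs

lemma dseg_eq_tseg (n m : Finset ℕ) : dseg n m = ⨆ a : ℕ, ⨆ b : ℕ, tseg n m a b := rfl

lemma cnt_zero (n : Finset ℕ) : cnt n 0 = 0 := by simp [cnt]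

lemma cnt_succ (n : Finset ℕ) (x : ℕ) :
    cnt n (x + 1) = cnt n x + (if x ∈ n then 1 else 0) := by
  unfold cnt
  rw [show (n.filter (· < x + 1)) = (n.filter (· < x)) ∪ n.filter (· = x) by
    rw [← filter_or]; apply filter_congr; intro y _; simp [Nat.lt_succ_iff_lt_or_eq, Nat.le_iff_lt_or_eq]]
  rw [card_union_of_disjoint (by simp [disjoint_left, Finset.mem_filter]; intros; omega)]
  congr 1
  by_cases h : x ∈ n <;> simp [filter_eq', h]

lemma cnt_mono (n : Finset ℕ) : Monotone (cnt n) := by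
  intro a b hab
  exact card_le_card (fun y hy => by simp only [mem_filter] at *; exact ⟨hy.1, lt_of_lt_of_le hy.2 hab⟩)

lemma cnt_le_card (n : Finset ℕ) (x : ℕ) : cnt n x ≤ n.card :=
  card_le_card (filter_subset _ _)

lemma cnt_eq_card (n : Finset ℕ) (x : ℕ) (h : ∀ y ∈ n, y < x) : cnt n x = n.card := by
  unfold cnt; congr 1; exact filter_true_of_mem h

lemma card_inter_Icc (n : Finset ℕ) (a b : ℕ) (h : a ≤ b + 1) :
    ((n ∩ Finset.Icc a b).card : ℤ) = (cnt n (b + 1) : ℤ) - cnt n a := by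
  have hsub : n.filter (· < a) ⊆ n.filter (· < b + 1) :=
    monotone_filter_right n (by intro y hy; omega) |>.trans (le_refl _)
  have : n ∩ Finset.Icc a b = n.filter (· < b + 1) \ n.filter (· < a) := by
    ext y; simp only [Finset.mem_inter, Finset.mem_Icc, Finset.mem_sdiff, Finset.mem_filter]; constructor <;> intro hy
    · exact ⟨⟨hy.1, by omega⟩, fun h' => by omega⟩
    · refine ⟨hy.1.1, ?_, by omega⟩
      rcases hy with ⟨⟨h1, h2⟩, h3⟩; by_contra hc; exact h3 ⟨h1, by omega⟩
  rw [this, card_sdiff_of_subset hsub]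
  have := card_le_card hsub
  unfold cnt
  push_cast [Nat.cast_sub this]
  ring

lemma tseg_le_sum (n m : Finset ℕ) (a b : ℕ) : tseg n m a b ≤ n.card + m.card := by
  unfold tseg
  have h1 : (n ∩ Finset.Icc a b).card ≤ n.card := card_le_card (inter_subset_left)
  have h2 : (m ∩ Finset.Icc a b).card ≤ m.card := card_le_card (inter_subset_left)
  omega

lemma bdd_inner (n m : Finset ℕ) (a : ℕ) : BddAbove (Set.range (fun b => tseg n m a b)) :=
  ⟨n.card + m.card, by rintro _ ⟨b, rfl⟩; exact tseg_le_sum n m a b⟩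

lemma bdd_outer (n m : Finset ℕ) : BddAbove (Set.range (fun a => ⨆ b, tseg n m a b)) :=
  ⟨n.card + m.card, by rintro _ ⟨a, rfl⟩; exact ciSup_le fun b => tseg_le_sum n m a b⟩

lemma le_dseg (n m : Finset ℕ) (a b : ℕ) : tseg n m a b ≤ dseg n m := by
  rw [dseg_eq_tseg]
  have h1 : tseg n m a b ≤ ⨆ b, tseg n m a b := le_ciSup (bdd_inner n m a) b
  exact h1.trans (le_ciSup (bdd_outer n m) a)

lemma dseg_le (n m : Finset ℕ) (D : ℕ) (h : ∀ a b, tseg n m a b ≤ D) : dseg n m ≤ D := by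
  rw [dseg_eq_tseg]
  exact ciSup_le fun a => ciSup_le fun b => h a b

lemma tseg_eq (n m : Finset ℕ) (a b : ℕ) (h : a ≤ b + 1) :
    tseg n m a b = (Fd n m (b+1) - Fd n m a).natAbs := by
  unfold tseg Fd
  rw [card_inter_Icc n a b h, card_inter_Icc m a b h]
  congr 1; ring

lemma tseg_empty (n m : Finset ℕ) (a b : ℕ) (h : b + 1 < a) : tseg n m a b = 0 := by
  unfold tseg
  rw [Finset.Icc_eq_empty (by omega)]
  simp

lemma dseg_eq_of (n m : Finset ℕ) (Mo μo : ℤ)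
    (hub : ∀ x, Fd n m x ≤ Mo) (hlb : ∀ x, μo ≤ Fd n m x)
    (hM : ∃ x, Fd n m x = Mo) (hμ : ∃ x, Fd n m x = μo) :
    dseg n m = (Mo - μo).toNat := by
  obtain ⟨x1, hx1⟩ := hM
  obtain ⟨x2, hx2⟩ := hμ
  apply le_antisymm
  · apply dseg_le
    intro a b
    rcases le_or_gt a (b+1) with h | h
    · rw [tseg_eq n m a b h]
      have h1 := hub (b+1); have h2 := hlb (b+1)
      have h3 := hub a; have h4 := hlb a
      omega
    · rw [tseg_empty n m a b h]; omega
  · set u := max x1 x2 with hu_def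
    set v := min x1 x2 with hv_def
    rcases Nat.eq_zero_or_pos u with hu | hu
    · have hx10 : x1 = 0 := by omega
      have hx20 : x2 = 0 := by omega
      have hMe : Mo = μo := by rw [← hx1, hx10, ← hx2, ← hx20]
      simp [hMe]
    · have h1 : tseg n m v (u - 1) ≤ dseg n m := le_dseg n m v (u-1)
      rw [tseg_eq n m v (u-1) (by omega)] at h1
      have hvu : u - 1 + 1 = u := by omega
      rw [hvu] at h1
      have key : (Fd n m u - Fd n m v).natAbs = (Mo - μo).toNat := by
        have hMμ : μo ≤ Mo := (hlb x1).trans_eq hx1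
        rcases le_total x1 x2 with h | h
        · have h2 : u = x2 := by omega
          have h3 : v = x1 := by omega
          rw [h2, h3, hx1, hx2]; omega
        · have h2 : u = x1 := by omega
          have h3 : v = x2 := by omega
          rw [h2, h3, hx1, hx2]; omega
      omega

lemma dseg_self (n : Finset ℕ) : dseg n n = 0 := by
  have := dseg_eq_of n n 0 0 (fun x => by simp [Fd]) (fun x => by simp [Fd])
    ⟨0, by simp [Fd]⟩ ⟨0, by simp [Fd]⟩
  simpa using this

lemma eq_of_dseg_eq_zero {n m : Finset ℕ} (h : dseg n m = 0) : n = m := by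
  ext y
  have h1 : tseg n m y y ≤ 0 := h ▸ le_dseg n m y y
  unfold tseg at h1
  rw [Finset.Icc_self] at h1
  have h2 : (n ∩ {y}).card = (m ∩ {y}).card := by omega
  by_cases hy : y ∈ n <;> by_cases hy' : y ∈ m <;>
    simp [Finset.inter_singleton_of_mem, Finset.inter_singleton_of_notMem, hy, hy'] at h2 <;>
    simp [hy, hy']

lemma dseg_triangle (a b c : Finset ℕ) : dseg a c ≤ dseg a b + dseg b c := by
  apply dseg_le
  intro x y
  have h1 : tseg a b x y ≤ dseg a b := le_dseg a b x y
  have h2 : tseg b c x y ≤ dseg b c := le_dseg b c x y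
  unfold tseg at *
  omega

/-! ### Bounds and stabilization -/

lemma exists_finset_of_fn (h : ℕ → ℤ) (h0 : h 0 = 0)
    (hstep : ∀ x, h (x+1) = h x ∨ h (x+1) = h x + 1)
    (N : ℕ) (hconst : ∀ x, N ≤ x → h (x+1) = h x) :
    ∃ l : Finset ℕ, (∀ x, (cnt l x : ℤ) = h x) ∧ l ⊆ Finset.range N := by
  refine ⟨(Finset.range N).filter (fun x => h (x+1) = h x + 1), ?_, filter_subset _ _⟩
  intro x
  induction x with
  | zero => rw [cnt_zero, h0]; rfl
  | succ x ih =>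
    rw [cnt_succ, Nat.cast_add, ih]
    rcases lt_or_ge x N with hx | hx
    · rcases hstep x with he | he
      · rw [if_neg, he]; · push_cast; ring
        simp only [mem_filter, mem_range]
        rintro ⟨-, hc⟩; omega
      · rw [if_pos, he]; · push_cast; ring
        simp only [mem_filter, mem_range]; exact ⟨hx, he⟩
    · rw [if_neg, hconst x hx]; · push_cast; ring
      simp only [mem_filter, mem_range]; rintro ⟨hc, -⟩; omega

/-- A uniform strict bound on elements of `n ∪ m`. -/
def bnd (n m : Finset ℕ) : ℕ := (n ∪ m).sup id + 1

lemma lt_bnd_left (n m : Finset ℕ) {y : ℕ} (hy : y ∈ n) : y < bnd n m :=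
  Nat.lt_succ_of_le (le_sup (f := id) (mem_union_left _ hy))

lemma lt_bnd_right (n m : Finset ℕ) {y : ℕ} (hy : y ∈ m) : y < bnd n m :=
  Nat.lt_succ_of_le (le_sup (f := id) (mem_union_right _ hy))

lemma cnt_of_bnd_le (n m : Finset ℕ) {x : ℕ} (hx : bnd n m ≤ x) : cnt n x = n.card :=
  cnt_eq_card n x (fun y hy => lt_of_lt_of_le (lt_bnd_left n m hy) hx)

lemma cnt_of_bnd_le' (n m : Finset ℕ) {x : ℕ} (hx : bnd n m ≤ x) : cnt m x = m.card :=
  cnt_eq_card m x (fun y hy => lt_of_lt_of_le (lt_bnd_right n m hy) hx)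

lemma Fd_zero (n m : Finset ℕ) : Fd n m 0 = 0 := by simp [Fd, cnt_zero]

lemma Fd_stable (n m : Finset ℕ) (hc : n.card = m.card) {x : ℕ} (hx : bnd n m ≤ x) :
    Fd n m x = 0 := by
  unfold Fd
  rw [cnt_of_bnd_le n m hx, cnt_of_bnd_le' n m hx, hc]; ring

lemma exists_max_min (n m : Finset ℕ) (hc : n.card = m.card) :
    ∃ M μ : ℤ, (∀ x, Fd n m x ≤ M) ∧ (∀ x, μ ≤ Fd n m x) ∧
      (∃ x, Fd n m x = M) ∧ (∃ x, Fd n m x = μ) ∧ μ ≤ 0 ∧ 0 ≤ M := by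
  set N := bnd n m
  have hne : ((Finset.range (N+1)).image (Fd n m)).Nonempty := by
    apply Nonempty.image; exact ⟨0, mem_range.2 (by omega)⟩
  set M := ((Finset.range (N+1)).image (Fd n m)).max' hne with hM_def
  set μ := ((Finset.range (N+1)).image (Fd n m)).min' hne with hμ_def
  have hmem : ∀ x, x < N + 1 → Fd n m x ∈ (Finset.range (N+1)).image (Fd n m) := by
    intro x hx; exact mem_image_of_mem _ (mem_range.2 hx)
  have hall : ∀ x, Fd n m x ≤ M ∧ μ ≤ Fd n m x := by
    intro x
    rcases lt_or_ge x (N+1) with hx | hx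
    · exact ⟨le_max' _ _ (hmem x hx), min'_le _ _ (hmem x hx)⟩
    · rw [Fd_stable n m hc (by omega)]
      have h0 : Fd n m N ∈ _ := hmem N (by omega)
      rw [Fd_stable n m hc (le_refl _)] at h0
      exact ⟨le_max' _ _ h0, min'_le _ _ h0⟩
  obtain ⟨yM, hyM, hyM2⟩ := mem_image.1 (max'_mem _ hne)
  obtain ⟨yμ, hyμ, hyμ2⟩ := mem_image.1 (min'_mem _ hne)
  have h0 : Fd n m 0 = 0 := Fd_zero n m
  exact ⟨M, μ, fun x => (hall x).1, fun x => (hall x).2, ⟨yM, hyM2⟩, ⟨yμ, hyμ2⟩,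
    h0 ▸ (hall 0).2, h0 ▸ (hall 0).1⟩

/-! ### The construction of the intermediate set -/

lemma build (n m : Finset ℕ) (hc : n.card = m.card) (M' μ' : ℤ) (hμ' : μ' ≤ 0) (hM' : 0 ≤ M') :
    ∃ l : Finset ℕ, l.card = n.card ∧
      ∀ x, (cnt l x : ℤ) = (cnt m x : ℤ) + max μ' (min M' (Fd n m x)) := by
  set c : ℕ → ℤ := fun x => max μ' (min M' (Fd n m x)) with hc_def
  set h : ℕ → ℤ := fun x => (cnt m x : ℤ) + c x with hh_def
  set N := bnd n m with hN_def
  have hFdstep : ∀ x, Fd n m (x+1) =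
      Fd n m x + ((if x ∈ n then (1:ℤ) else 0) - (if x ∈ m then (1:ℤ) else 0)) := by
    intro x; unfold Fd; rw [cnt_succ n x, cnt_succ m x]
    by_cases h1 : x ∈ n <;> by_cases h2 : x ∈ m <;> simp [h1, h2] <;> push_cast <;> ring
  have h0 : h 0 = 0 := by
    simp only [hh_def, hc_def, cnt_zero, Fd_zero, Nat.cast_zero]
    omega
  have hstep : ∀ x, h (x+1) = h x ∨ h (x+1) = h x + 1 := by
    intro x
    have hF := hFdstep x
    simp only [hh_def, hc_def]
    rw [cnt_succ m x]
    by_cases h1 : x ∈ n <;> by_cases h2 : x ∈ m <;>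
      simp only [h1, h2, if_true, if_false] at hF ⊢ <;> push_cast <;> omega
  have hconst : ∀ x, N ≤ x → h (x+1) = h x := by
    intro x hx
    have e1 : Fd n m (x+1) = 0 := Fd_stable n m hc (by omega)
    have e2 : Fd n m x = 0 := Fd_stable n m hc hx
    have e3 : cnt m (x+1) = m.card := cnt_of_bnd_le' n m (by omega)
    have e4 : cnt m x = m.card := cnt_of_bnd_le' n m hx
    simp only [hh_def, hc_def, e1, e2, e3, e4]
  obtain ⟨l, hl, hlsub⟩ := exists_finset_of_fn h h0 hstep N hconst
  refine ⟨l, ?_, fun x => hl x⟩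
  have h1 : (l.card : ℤ) = h N := by
    rw [← hl N]; congr 1
    exact (cnt_eq_card l N (fun y hy => mem_range.1 (hlsub hy))).symm
  have h2 : h N = m.card := by
    simp only [hh_def, hc_def, Fd_stable n m hc (le_refl N), cnt_of_bnd_le' n m (le_refl N)]
    omega
  have := h1.trans h2
  rw [hc]; exact_mod_cast this

lemma geodesic_step (n m : Finset ℕ) (hc : n.card = m.card) (h2 : 2 ≤ dseg n m) :
    ∃ l : Finset ℕ, l.card = n.card ∧ l ≠ n ∧ l ≠ m ∧
      dseg n l = 1 ∧ dseg l m = dseg n m - 1 := by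
  obtain ⟨M, μ, hub, hlb, ⟨x1, hx1⟩, ⟨x2, hx2⟩, hμ0, hM0⟩ := exists_max_min n m hc
  have hD : dseg n m = (M - μ).toNat := dseg_eq_of n m M μ hub hlb ⟨x1, hx1⟩ ⟨x2, hx2⟩
  have hgap : μ + 2 ≤ M := by rw [hD] at h2; omega
  rcases le_or_gt 1 M with hM1 | hM1
  · -- case M ≥ 1 : clamp to [μ, M-1]
    obtain ⟨l, hlcard, hlcnt⟩ := build n m hc (M - 1) μ hμ0 (by omega)
    have hFlm : ∀ x, Fd l m x = max μ (min (M - 1) (Fd n m x)) := by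
      intro x; have h := hlcnt x; unfold Fd at h ⊢; omega
    have hFnl : ∀ x, Fd n l x = Fd n m x - max μ (min (M - 1) (Fd n m x)) := by
      intro x; have h := hlcnt x; unfold Fd at h ⊢; omega
    have hd1 : dseg n l = 1 := by
      have := dseg_eq_of n l 1 0
        (fun x => by rw [hFnl x]; have := hub x; have := hlb x; omega)
        (fun x => by rw [hFnl x]; have := hub x; have := hlb x; omega)
        ⟨x1, by rw [hFnl x1, hx1]; omega⟩
        ⟨0, by rw [hFnl 0]; have := hlb 0; have := hub 0; simp [Fd, cnt]; omega⟩
      simpa using this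
    have hd2 : dseg l m = (M - 1 - μ).toNat := by
      apply dseg_eq_of l m (M-1) μ
      · intro x; rw [hFlm x]; have := hub x; have := hlb x; omega
      · intro x; rw [hFlm x]; have := hub x; have := hlb x; omega
      · exact ⟨x1, by rw [hFlm x1, hx1]; omega⟩
      · exact ⟨x2, by rw [hFlm x2, hx2]; omega⟩
    refine ⟨l, hlcard, ?_, ?_, hd1, by rw [hd2, hD]; omega⟩
    · intro h; rw [h, dseg_self] at hd1; omega
    · intro h; rw [h, dseg_self] at hd2; omega
  · -- case M = 0, μ ≤ -2 : clamp to [μ+1, 0]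
    have hM00 : M = 0 := by omega
    obtain ⟨l, hlcard, hlcnt⟩ := build n m hc 0 (μ + 1) (by omega) (le_refl 0)
    have hFlm : ∀ x, Fd l m x = max (μ+1) (min 0 (Fd n m x)) := by
      intro x; have h := hlcnt x; unfold Fd at h ⊢; omega
    have hFnl : ∀ x, Fd n l x = Fd n m x - max (μ+1) (min 0 (Fd n m x)) := by
      intro x; have h := hlcnt x; unfold Fd at h ⊢; omega
    have hd1 : dseg n l = 1 := by
      have := dseg_eq_of n l 0 (-1)
        (fun x => by rw [hFnl x]; have := hub x; have := hlb x; omega)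
        (fun x => by rw [hFnl x]; have := hub x; have := hlb x; omega)
        ⟨0, by rw [hFnl 0]; have := hlb 0; have := hub 0; simp [Fd, cnt]; omega⟩
        ⟨x2, by rw [hFnl x2, hx2]; omega⟩
      simpa using this
    have hd2 : dseg l m = (0 - (μ+1)).toNat := by
      apply dseg_eq_of l m 0 (μ+1)
      · intro x; rw [hFlm x]; have := hub x; have := hlb x; omega
      · intro x; rw [hFlm x]; have := hub x; have := hlb x; omega
      · exact ⟨0, by rw [hFlm 0]; have := hlb 0; have := hub 0; simp [Fd, cnt]; omega⟩
      · exact ⟨x2, by rw [hFlm x2, hx2]; omega⟩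
    refine ⟨l, hlcard, ?_, ?_, hd1, by rw [hd2, hD]; omega⟩
    · intro h; rw [h, dseg_self] at hd1; omega
    · intro h; rw [h, dseg_self] at hd2; omega

/-! ### Interlacing and `dseg = 1` -/

lemma elt_eq' {k : ℕ} (n : Finset ℕ) (hn : n.card = k) (i : Fin k) :
    elt n hn i = n.orderEmbOfFin hn i := rfl

lemma cnt_elt {k : ℕ} (n : Finset ℕ) (hn : n.card = k) (i : Fin k) :
    cnt n (elt n hn i) = i := by
  rw [elt_eq']
  unfold cnt
  have himg : n.filter (· < n.orderEmbOfFin hn i) =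
      (Finset.Iio i).image (n.orderEmbOfFin hn) := by
    ext y
    simp only [mem_filter, mem_image, Finset.mem_Iio]
    constructor
    · rintro ⟨hy, hlt⟩
      have : y ∈ Set.range (n.orderEmbOfFin hn) := by
        rw [range_orderEmbOfFin]; exact hy
      obtain ⟨j, rfl⟩ := this
      exact ⟨j, (OrderEmbedding.lt_iff_lt _).1 hlt, rfl⟩
    · rintro ⟨j, hj, rfl⟩
      exact ⟨orderEmbOfFin_mem n hn j, (OrderEmbedding.lt_iff_lt _).2 hj⟩
  rw [himg, card_image_of_injective _ (n.orderEmbOfFin hn).injective, Fin.card_Iio]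

lemma cnt_elt_succ {k : ℕ} (n : Finset ℕ) (hn : n.card = k) (i : Fin k) :
    cnt n (elt n hn i + 1) = i + 1 := by
  rw [cnt_succ, cnt_elt]
  rw [if_pos]
  exact (elt_eq' n hn i) ▸ orderEmbOfFin_mem n hn i

lemma elt_lt_iff {k : ℕ} (n : Finset ℕ) (hn : n.card = k) (i : Fin k) (x : ℕ) :
    elt n hn i < x ↔ (i : ℕ) < cnt n x := by
  constructor
  · intro h
    have := cnt_mono n (Nat.succ_le_of_lt h)
    rw [cnt_elt_succ] at this
    omega
  · intro h
    by_contra hc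
    push_neg at hc
    have := cnt_mono n hc
    rw [cnt_elt] at this
    omega

lemma interlaced_iff {k : ℕ} (n m : Finset ℕ) (hn : n.card = k) (hm : m.card = k) :
    InterlacedLE n m hn hm ↔ ∀ x, cnt m x ≤ cnt n x ∧ cnt n x ≤ cnt m x + 1 := by
  constructor
  · rintro ⟨h1, h2⟩ x
    constructor
    · rcases Nat.eq_zero_or_pos (cnt m x) with h0 | h0
      · omega
      · have hjk : cnt m x - 1 < k := by have := cnt_le_card m x; omega
        set j : Fin k := ⟨cnt m x - 1, hjk⟩
        have hm1 : elt m hm j < x := (elt_lt_iff m hm j x).2 (by simp [j]; omega)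
        have := lt_of_le_of_lt (h1 j) hm1
        have := (elt_lt_iff n hn j x).1 this
        simp only [j] at this; omega
    · by_contra hcon
      push_neg at hcon
      have hjk : cnt m x + 1 < k := by have := cnt_le_card n x; rw [hn] at this; omega
      set j : Fin k := ⟨cnt m x + 1, hjk⟩
      set i : Fin k := ⟨cnt m x, by omega⟩
      have hn1 : elt n hn j < x := (elt_lt_iff n hn j x).2 (by simp [j]; omega)
      have := lt_of_le_of_lt (h2 i j (by simp [i, j])) hn1
      have := (elt_lt_iff m hm i x).1 this
      simp only [i] at this; omega
  · intro h
    constructor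
    · intro i
      by_contra hcon
      push_neg at hcon
      have h1 : (i : ℕ) < cnt m (elt n hn i) := (elt_lt_iff m hm i _).1 hcon
      have h2 : cnt n (elt n hn i) = i := cnt_elt n hn i
      have := (h (elt n hn i)).1
      omega
    · intro i j hij
      by_contra hcon
      push_neg at hcon
      have h1 : (j : ℕ) < cnt n (elt m hm i) := (elt_lt_iff n hn j _).1 hcon
      have h2 : cnt m (elt m hm i) = i := cnt_elt m hm i
      have := (h (elt m hm i)).2
      omega

lemma cnt_inj {n m : Finset ℕ} (h : ∀ x, cnt n x = cnt m x) : n = m := by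
  ext y
  have h1 := cnt_succ n y
  have h2 := cnt_succ m y
  rw [h y, h (y+1)] at h1
  by_cases hy : y ∈ n <;> by_cases hy' : y ∈ m <;> simp [hy, hy'] at h1 h2 ⊢ <;> omega

lemma dseg_eq_one_iff {k : ℕ} (n m : Finset ℕ) (hn : n.card = k) (hm : m.card = k) :
    dseg n m = 1 ↔ n ≠ m ∧ (InterlacedLE n m hn hm ∨ InterlacedLE m n hm hn) := by
  have hc : n.card = m.card := hn.trans hm.symm
  constructor
  · intro h1
    have hne : n ≠ m := by
      intro he; rw [he, dseg_self] at h1; omega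
    refine ⟨hne, ?_⟩
    obtain ⟨M, μ, hub, hlb, ⟨x1, hx1⟩, ⟨x2, hx2⟩, hμ0, hM0⟩ := exists_max_min n m hc
    have hD : dseg n m = (M - μ).toNat := dseg_eq_of n m M μ hub hlb ⟨x1, hx1⟩ ⟨x2, hx2⟩
    rw [h1] at hD
    rcases le_or_gt 1 M with hM1 | hM1
    · -- M = 1, μ = 0
      have hμe : μ = 0 := by omega
      have hMe : M = 1 := by omega
      left
      rw [interlaced_iff]
      intro x
      have := hub x; have := hlb x
      rw [hμe] at *; rw [hMe] at *
      unfold Fd at *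
      omega
    · -- M = 0, μ = -1
      have hμe : μ = -1 := by omega
      right
      rw [interlaced_iff]
      intro x
      have := hub x; have := hlb x
      unfold Fd at *
      omega
  · rintro ⟨hne, hil | hil⟩
    · rw [interlaced_iff] at hil
      have hex : ∃ x, Fd n m x = 1 := by
        by_contra hcon
        push_neg at hcon
        apply hne
        apply cnt_inj
        intro x
        have := (hil x).1; have := (hil x).2; have := hcon x
        unfold Fd at *
        omega
      have := dseg_eq_of n m 1 0
        (fun x => by have := (hil x).2; unfold Fd; omega)
        (fun x => by have := (hil x).1; unfold Fd; omega)
        hex ⟨0, Fd_zero n m⟩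
      simpa using this
    · rw [interlaced_iff] at hil
      have hex : ∃ x, Fd n m x = -1 := by
        by_contra hcon
        push_neg at hcon
        apply hne
        apply cnt_inj
        intro x
        have := (hil x).1; have := (hil x).2; have := hcon x
        unfold Fd at *
        omega
      have := dseg_eq_of n m 0 (-1)
        (fun x => by have := (hil x).1; unfold Fd; omega)
        (fun x => by have := (hil x).2; unfold Fd; omega)
        ⟨0, Fd_zero n m⟩ hex
      simpa using this

/-! ### The graph metric -/

lemma adj_iff_dseg {k : ℕ} (x y : Vk k) :
    (interGraph k).Adj x y ↔ dseg x.1 y.1 = 1 := by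
  rw [dseg_eq_one_iff x.1 y.1 x.2 y.2]
  show (x ≠ y ∧ _) ↔ _
  constructor
  · rintro ⟨h1, h2⟩
    exact ⟨fun he => h1 (Subtype.ext he), h2⟩
  · rintro ⟨h1, h2⟩
    exact ⟨fun he => h1 (congrArg Subtype.val he), h2⟩

lemma exists_short_walk {k : ℕ} (D : ℕ) :
    ∀ x y : Vk k, dseg x.1 y.1 = D → ∃ p : (interGraph k).Walk x y, p.length ≤ D := by
  induction D using Nat.strong_induction_on with
  | _ D ih =>
    intro x y hD
    match D, hD with
    | 0, hD =>
      have : x = y := Subtype.ext (eq_of_dseg_eq_zero hD)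
      subst this
      exact ⟨SimpleGraph.Walk.nil, by simp⟩
    | 1, hD =>
      have hadj : (interGraph k).Adj x y := (adj_iff_dseg x y).2 hD
      exact ⟨SimpleGraph.Walk.cons hadj SimpleGraph.Walk.nil, by simp⟩
    | (D+2), hD =>
      obtain ⟨l, hlcard, hln, hlm, hd1, hd2⟩ :=
        geodesic_step x.1 y.1 (x.2.trans y.2.symm) (by omega)
      set L : Vk k := ⟨l, hlcard.trans x.2⟩ with hL_def
      have hadj : (interGraph k).Adj x L := by
        rw [adj_iff_dseg]
        have : dseg x.1 l = 1 := hd1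
        exact this
      rw [hD] at hd2
      obtain ⟨q, hq⟩ := ih (D+1) (by omega) L y hd2
      exact ⟨SimpleGraph.Walk.cons hadj q, by simp; omega⟩

lemma dseg_le_walk {k : ℕ} {x y : Vk k} (p : (interGraph k).Walk x y) :
    dseg x.1 y.1 ≤ p.length := by
  induction p with
  | nil => simp [dseg_self]
  | @cons a b c h q ih =>
    have h1 : dseg a.1 b.1 = 1 := (adj_iff_dseg a b).1 h
    have h2 : dseg a.1 c.1 ≤ dseg a.1 b.1 + dseg b.1 c.1 := dseg_triangle a.1 b.1 c.1
    simp only [SimpleGraph.Walk.length_cons]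
    omega

/-- If `d(n,m) ≥ 2` then there is a `k`-element subset `l`, distinct from both, with
`d(n,l) = 1` and `d(l,m) = d(n,m) - 1`; consequently `d` coincides with the shortest-path
metric of the interlacing graph on `[ℕ]^k`. -/
theorem dseg_geodesic (k : ℕ) :
    (∀ n m : Finset ℕ, n.card = k → m.card = k → 2 ≤ dseg n m →
      ∃ l : Finset ℕ, l.card = k ∧ l ≠ n ∧ l ≠ m ∧
        dseg n l = 1 ∧ dseg l m = dseg n m - 1) ∧
    (∀ x y : Vk k, (interGraph k).dist x y = dseg x.1 y.1) := by
  constructor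
  · intro n m hn hm h2
    obtain ⟨l, hlcard, hln, hlm, hd1, hd2⟩ := geodesic_step n m (hn.trans hm.symm) h2
    exact ⟨l, hlcard.trans hn, hln, hlm, hd1, hd2⟩
  · intro x y
    obtain ⟨p, hp⟩ := exists_short_walk (dseg x.1 y.1) x y rfl
    apply le_antisymm
    · exact (SimpleGraph.dist_le p).trans hp
    · have hreach : (interGraph k).Reachable x y := ⟨p⟩
      obtain ⟨q, hq⟩ := hreach.exists_walk_length_eq_dist
      calc dseg x.1 y.1 ≤ q.length := dseg_le_walk q
        _ = (interGraph k).dist x y := hq
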